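/- Let λ_1 ≤ … ≤ λ_N be real, N_e ∈ (0,2N), and suppose N^∞(λ_s) ≠ N_e for every s, where N^∞(τ) := 2·#{s: λ_s < τ} + #{s: λ_s = τ}. Let ε̲ < ε̄ be the adjacent eigenvalues with N^∞ ≤ N_e at ε̲ and N^∞ ≥ N_e at ε̄, and let ε_F^β solve 2Σ_s f_β(λ_s - ε_F^β) = N_e. If N^∞((ε̲+ε̄)/2) = N_e then ε_F^β → (ε̲+ε̄)/2 as β → ∞. -/

import Mathlib

open Finset

private lemma fermiA (u : ℝ) : 1 / (1 + Real.exp u) ≤ Real.exp (-u) := by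
  have h1 : (0:ℝ) < 1 + Real.exp u := by positivity
  have h2 : Real.exp (-u) * Real.exp u = 1 := by rw [← Real.exp_add]; simp
  rw [div_le_iff₀ h1]
  nlinarith [Real.exp_pos (-u)]

private lemma fermiB {u : ℝ} (hu : 0 ≤ u) :
    1 / (1 + Real.exp (-u)) ≤ 1 - Real.exp (-u) / 2 := by
  have hx0 : (0:ℝ) < Real.exp (-u) := Real.exp_pos _
  have hx1 : Real.exp (-u) ≤ 1 := Real.exp_le_one_iff.mpr (by linarith)
  have h1 : (0:ℝ) < 1 + Real.exp (-u) := by positivity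
  rw [div_le_iff₀ h1]
  nlinarith

private lemma fermiC (u : ℝ) : 1 - Real.exp u ≤ 1 / (1 + Real.exp u) := by
  have h1 : (0:ℝ) < 1 + Real.exp u := by positivity
  rw [le_div_iff₀ h1]
  nlinarith [Real.exp_pos u]

private lemma fermiD {u : ℝ} (hu : 0 ≤ u) :
    Real.exp (-u) / 2 ≤ 1 / (1 + Real.exp u) := by
  have hx : (1:ℝ) ≤ Real.exp u := Real.one_le_exp hu
  have h1 : (0:ℝ) < 1 + Real.exp u := by positivity
  have h2 : Real.exp (-u) * Real.exp u = 1 := by rw [← Real.exp_add]; simp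
  rw [div_le_div_iff₀ (by norm_num) h1]
  nlinarith [Real.exp_pos (-u)]

private lemma fermiMono {u v : ℝ} (huv : u ≤ v) :
    1 / (1 + Real.exp v) ≤ 1 / (1 + Real.exp u) := by
  apply one_div_le_one_div_of_le (by positivity)
  have := Real.exp_le_exp.mpr huv
  linarith

private lemma fermiLeOne (u : ℝ) : 1 / (1 + Real.exp u) ≤ 1 := by
  rw [div_le_one (by positivity)]
  nlinarith [Real.exp_pos u]

set_option maxHeartbeats 1000000 in
/-- Zero temperature limit of the Fermi level, mid-gap case: if no eigenvalue solves
`N^∞(λ_s) = N_e`, `ε̲ < ε̄` are the adjacent eigenvalues enclosing the gap, and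
`N^∞((ε̲+ε̄)/2) = N_e`, then `ε_F^β → (ε̲+ε̄)/2` as `β → ∞`. -/
theorem fermi_level_zero_temp_limit_midgap_case
    (N : ℕ) (lam : Fin N → ℝ) (hmono : Monotone lam)
    (Ne : ℝ) (hNe : Ne ∈ Set.Ioo (0 : ℝ) (2 * N))
    (Ninf : ℝ → ℝ)
    (hNinf : ∀ τ : ℝ, Ninf τ =
      2 * (Nat.card {s : Fin N // lam s < τ} : ℝ) +
        (Nat.card {s : Fin N // lam s = τ} : ℝ))
    (hnot : ∀ s : Fin N, Ninf (lam s) ≠ Ne)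
    (εlo εhi : ℝ)
    (hlo_mem : ∃ s : Fin N, lam s = εlo) (hhi_mem : ∃ s : Fin N, lam s = εhi)
    (hlt : εlo < εhi)
    (hlo : Ninf εlo ≤ Ne) (hlo_max : ∀ s : Fin N, Ninf (lam s) ≤ Ne → lam s ≤ εlo)
    (hhi : Ne ≤ Ninf εhi) (hhi_min : ∀ s : Fin N, Ne ≤ Ninf (lam s) → εhi ≤ lam s)
    (hmid : Ninf ((εlo + εhi) / 2) = Ne)
    (εF : ℝ → ℝ)
    (hεF : ∀ β : ℝ, 0 < β →
      2 * ∑ s, 1 / (1 + Real.exp (β * (lam s - εF β))) = Ne) :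
    Filter.Tendsto εF Filter.atTop (nhds ((εlo + εhi) / 2)) := by
  classical
  set μ : ℝ := (εlo + εhi) / 2 with hμ
  set h : ℝ := (εhi - εlo) / 2 with hh
  have hh0 : 0 < h := by rw [hh]; linarith
  have hμ1 : μ = εlo + h := by rw [hμ, hh]; ring
  have hμ2 : μ = εhi - h := by rw [hμ, hh]; ring
  have hμlo : εlo < μ := by rw [hμ1]; linarith
  have hμhi : μ < εhi := by rw [hμ2]; linarith
  -- dichotomy
  have hdich : ∀ s : Fin N, lam s ≤ εlo ∨ εhi ≤ lam s := by
    intro s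
    rcases lt_or_ge (Ninf (lam s)) Ne with hc | hc
    · exact Or.inl (hlo_max s hc.le)
    · exact Or.inr (hhi_min s hc)
  set L : Finset (Fin N) := Finset.univ.filter (fun s => lam s ≤ εlo) with hL
  set k : ℕ := L.card with hkdef
  have hmemL : ∀ s : Fin N, s ∈ L ↔ lam s ≤ εlo := by
    intro s; rw [hL]; simp
  -- Ne = 2k
  have hcard0 : Nat.card {s : Fin N // lam s = μ} = 0 := by
    haveI : IsEmpty {s : Fin N // lam s = μ} := by
      refine ⟨fun ⟨s, hs⟩ => hnot s ?_⟩
      rw [hs]; exact hmid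
    exact Nat.card_of_isEmpty
  have hfilter : Finset.univ.filter (fun s => lam s < μ) = L := by
    ext s
    rw [hmemL, Finset.mem_filter]
    simp only [Finset.mem_univ, true_and]
    constructor
    · intro h1
      rcases hdich s with h2 | h2
      · exact h2
      · linarith
    · intro h1; linarith
  have hcardk : Nat.card {s : Fin N // lam s < μ} = k := by
    rw [Nat.card_eq_fintype_card, Fintype.card_subtype, hfilter]
  have hk : Ne = 2 * (k : ℝ) := by
    have h1 := hNinf μ
    rw [hmid, hcard0, hcardk] at h1
    push_cast at h1
    linarith
  have hk1 : (1:ℝ) ≤ (k:ℝ) := by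
    have h0 : (0:ℝ) < 2 * (k:ℝ) := hk ▸ hNe.1
    have : 0 < k := by exact_mod_cast (by linarith : (0:ℝ) < (k:ℝ))
    exact_mod_cast this
  have hkN : (k : ℝ) ≤ N := by
    have : k ≤ N := le_trans (Finset.card_le_univ L) (by simp)
    exact_mod_cast this
  obtain ⟨slo, hslo⟩ := hlo_mem
  obtain ⟨shi, hshi⟩ := hhi_mem
  have hsloL : slo ∈ L := (hmemL slo).mpr (le_of_eq hslo)
  have hshiL : shi ∈ Lᶜ := by
    rw [Finset.mem_compl, hmemL, hshi]
    linarith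
  -- main limit
  rw [Metric.tendsto_atTop]
  intro ε hε
  set δ : ℝ := min ε h / 2 with hδdef
  have hδ0 : 0 < δ := by positivity
  have hδh : δ < h := by
    have : min ε h ≤ h := min_le_right _ _
    rw [hδdef]; linarith
  have hδε : δ < ε := by
    have : min ε h ≤ ε := min_le_left _ _
    rw [hδdef]; linarith
  refine ⟨max 1 (Real.log (2 * N + 1) / (2 * δ)), fun β hβ => ?_⟩
  have hβ1 : (1:ℝ) ≤ β := le_trans (le_max_left _ _) hβ
  have hβ0 : (0:ℝ) < β := lt_of_lt_of_le one_pos hβ1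
  have hexp : (2 * (N:ℝ) + 1) ≤ Real.exp (2 * β * δ) := by
    rw [← Real.exp_log (show (0:ℝ) < 2 * N + 1 by positivity)]
    apply Real.exp_le_exp.mpr
    have hle : Real.log (2 * N + 1) / (2 * δ) ≤ β := le_trans (le_max_right _ _) hβ
    calc Real.log (2 * (N:ℝ) + 1) = Real.log (2 * N + 1) / (2 * δ) * (2 * δ) := by
          field_simp
      _ ≤ β * (2 * δ) := mul_le_mul_of_nonneg_right hle (by positivity)
      _ = 2 * β * δ := by ring
  set x : ℝ := Real.exp (-(β * (h - δ))) with hxdef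
  set y : ℝ := Real.exp (-(β * (h + δ))) with hydef
  have hy0 : 0 < y := Real.exp_pos _
  have hx0 : 0 < x := Real.exp_pos _
  have hxy : x = y * Real.exp (2 * β * δ) := by
    rw [hxdef, hydef, ← Real.exp_add]
    ring_nf
  have h2Ny : 2 * (N:ℝ) * y < x := by
    rw [hxy]
    nlinarith [mul_le_mul_of_nonneg_right hexp hy0.le]
  have hβhδ : 0 ≤ β * (h - δ) := by nlinarith
  -- sum bound below μ - δ
  have hSlo : ∑ s, 1 / (1 + Real.exp (β * (lam s - (μ - δ)))) < (k:ℝ) := by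
    have hsplit := Finset.sum_add_sum_compl L
      (fun s => 1 / (1 + Real.exp (β * (lam s - (μ - δ)))))
    have hbound1 : ∑ s ∈ L, 1 / (1 + Real.exp (β * (lam s - (μ - δ))))
        ≤ ((k:ℝ) - 1) + (1 - x / 2) := by
      rw [← Finset.sum_erase_add L _ hsloL]
      have h1 : ∑ s ∈ L.erase slo, 1 / (1 + Real.exp (β * (lam s - (μ - δ))))
          ≤ ((k:ℝ) - 1) := by
        have hcard : ((L.erase slo).card : ℝ) = (k:ℝ) - 1 := by
          rw [Finset.card_erase_of_mem hsloL, ← hkdef]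
          have : 1 ≤ k := by exact_mod_cast hk1
          push_cast [this]
          ring
        calc ∑ s ∈ L.erase slo, 1 / (1 + Real.exp (β * (lam s - (μ - δ))))
            ≤ ∑ _s ∈ L.erase slo, (1:ℝ) :=
              Finset.sum_le_sum fun s _ => fermiLeOne _
          _ = ((L.erase slo).card : ℝ) := by rw [Finset.sum_const, nsmul_eq_mul, mul_one]
          _ = (k:ℝ) - 1 := hcard
      have h2 : 1 / (1 + Real.exp (β * (lam slo - (μ - δ)))) ≤ 1 - x / 2 := by
        have harg : β * (lam slo - (μ - δ)) = -(β * (h - δ)) := by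
          rw [hslo, hμ1]; ring
        rw [harg, hxdef]
        exact fermiB hβhδ
      linarith
    have hbound2 : ∑ s ∈ Lᶜ, 1 / (1 + Real.exp (β * (lam s - (μ - δ))))
        ≤ (N:ℝ) * y := by
      calc ∑ s ∈ Lᶜ, 1 / (1 + Real.exp (β * (lam s - (μ - δ))))
          ≤ ∑ _s ∈ Lᶜ, y := by
            apply Finset.sum_le_sum
            intro s hs
            have hsl : εhi ≤ lam s := by
              rcases hdich s with h1 | h1
              · exact absurd ((hmemL s).mpr h1) (Finset.mem_compl.mp hs)
              · exact h1
            have harg : β * (h + δ) ≤ β * (lam s - (μ - δ)) := by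
              apply mul_le_mul_of_nonneg_left _ hβ0.le
              rw [hμ2]; linarith
            calc 1 / (1 + Real.exp (β * (lam s - (μ - δ))))
                ≤ Real.exp (-(β * (lam s - (μ - δ)))) := fermiA _
              _ ≤ y := Real.exp_le_exp.mpr (by linarith)
        _ = (Lᶜ.card : ℝ) * y := by rw [Finset.sum_const, nsmul_eq_mul]
        _ ≤ (N:ℝ) * y := by
            apply mul_le_mul_of_nonneg_right _ hy0.le
            have : Lᶜ.card ≤ N := le_trans (Finset.card_le_univ _) (by simp)
            exact_mod_cast this
    calc ∑ s, 1 / (1 + Real.exp (β * (lam s - (μ - δ))))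
        = (∑ s ∈ L, 1 / (1 + Real.exp (β * (lam s - (μ - δ)))))
          + ∑ s ∈ Lᶜ, 1 / (1 + Real.exp (β * (lam s - (μ - δ)))) := hsplit.symm
      _ ≤ (((k:ℝ) - 1) + (1 - x / 2)) + (N:ℝ) * y := add_le_add hbound1 hbound2
      _ < (k:ℝ) := by linarith
  -- sum bound above μ + δ
  have hShi : (k:ℝ) < ∑ s, 1 / (1 + Real.exp (β * (lam s - (μ + δ)))) := by
    have hsplit := Finset.sum_add_sum_compl L
      (fun s => 1 / (1 + Real.exp (β * (lam s - (μ + δ)))))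
    have hbound1 : (k:ℝ) * (1 - y)
        ≤ ∑ s ∈ L, 1 / (1 + Real.exp (β * (lam s - (μ + δ)))) := by
      rw [hkdef, ← nsmul_eq_mul]
      apply Finset.card_nsmul_le_sum
      intro s hs
      have hsl : lam s ≤ εlo := (hmemL s).mp hs
      have harg : β * (lam s - (μ + δ)) ≤ -(β * (h + δ)) := by
        have h2 : β * (lam s - (μ + δ)) ≤ β * (-(h + δ)) := by
          apply mul_le_mul_of_nonneg_left _ hβ0.le
          rw [hμ1]; linarith
        linarith [h2, (by ring : β * (-(h + δ)) = -(β * (h + δ)))]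
      calc (1:ℝ) - y = 1 - Real.exp (-(β * (h + δ))) := rfl
        _ ≤ 1 - Real.exp (β * (lam s - (μ + δ))) := by
            have := Real.exp_le_exp.mpr harg
            linarith
        _ ≤ 1 / (1 + Real.exp (β * (lam s - (μ + δ)))) := fermiC _
    have hbound2 : x / 2
        ≤ ∑ s ∈ Lᶜ, 1 / (1 + Real.exp (β * (lam s - (μ + δ)))) := by
      calc x / 2 ≤ 1 / (1 + Real.exp (β * (h - δ))) := fermiD hβhδ
        _ = 1 / (1 + Real.exp (β * (lam shi - (μ + δ)))) := by
            rw [hshi, hμ2]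
            ring_nf
        _ ≤ ∑ s ∈ Lᶜ, 1 / (1 + Real.exp (β * (lam s - (μ + δ)))) := by
            apply Finset.single_le_sum _ hshiL
            intro i _
            positivity
    calc (k:ℝ) < (k:ℝ) * (1 - y) + x / 2 := by nlinarith [mul_le_mul_of_nonneg_right hkN hy0.le]
      _ ≤ (∑ s ∈ L, 1 / (1 + Real.exp (β * (lam s - (μ + δ)))))
          + ∑ s ∈ Lᶜ, 1 / (1 + Real.exp (β * (lam s - (μ + δ)))) :=
          add_le_add hbound1 hbound2
      _ = _ := hsplit
  -- conclude
  have hsum : ∑ s, 1 / (1 + Real.exp (β * (lam s - εF β))) = (k:ℝ) := by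
    have h1 := hεF β hβ0
    rw [hk] at h1
    linarith
  have hgt : μ - δ < εF β := by
    by_contra hcon
    push_neg at hcon
    have hle : ∑ s, 1 / (1 + Real.exp (β * (lam s - εF β)))
        ≤ ∑ s, 1 / (1 + Real.exp (β * (lam s - (μ - δ)))) := by
      apply Finset.sum_le_sum
      intro s _
      apply fermiMono
      apply mul_le_mul_of_nonneg_left _ hβ0.le
      linarith
    rw [hsum] at hle
    linarith
  have hltup : εF β < μ + δ := by
    by_contra hcon
    push_neg at hcon
    have hle : ∑ s, 1 / (1 + Real.exp (β * (lam s - (μ + δ))))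
        ≤ ∑ s, 1 / (1 + Real.exp (β * (lam s - εF β))) := by
      apply Finset.sum_le_sum
      intro s _
      apply fermiMono
      apply mul_le_mul_of_nonneg_left _ hβ0.le
      linarith
    rw [hsum] at hle
    linarith
  rw [Real.dist_eq, abs_lt]
  constructor <;> linarith
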